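/- Let 0 ≤ l_1 ≤ k, let J = {v_1 < ⋯ < v_b} ⊆ {1,…,k}, let p be the number of elements of J that are ≤ l_1, and let the complement of J ∩ [l_1+1, k] in the interval [l_1+1, k] be labeled v'_p < v'_{p−1} < ⋯ (with the convention that the labels beyond the size of the complement are set to k+1). Then the componentwise positive part of the vector κ(J) − κ([l_1+1, l_1+b]) equals Σ_{i=1}^p (κ({v_i}) − κ({v'_i})). -/

import Mathlib

/-- `κ(I)_α = #{i ∈ I : i ≤ α}`. -/
def kappa (I : Finset ℕ) (α : ℕ) : ℤ := ((I.filter (fun i => i ≤ α)).card : ℤ)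

/-- For a sorted list `L` of naturals all `< d`, `L.getD j d ≤ α` (with `α < d`)
iff `j` is less than the number of elements of `L` that are `≤ α`. -/
lemma sorted_getD_le_iff (L : List ℕ) (hs : L.Pairwise (· ≤ ·)) (α d : ℕ) (hd : α < d) :
    ∀ j : ℕ, (L.getD j d ≤ α ↔ j < (L.filter (fun x => x ≤ α)).length) := by
  induction L with
  | nil => intro j; simp [List.getD]; omega
  | cons a t ih =>
    rw [List.pairwise_cons] at hs
    obtain ⟨ha, ht⟩ := hs
    intro j
    have hft : ¬ a ≤ α → t.filter (fun x => x ≤ α) = [] := by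
      intro hA
      rw [List.filter_eq_nil_iff]
      intro x hx
      simp only [decide_eq_true_eq]
      exact fun h => hA (le_trans (ha x hx) h)
    match j with
    | 0 =>
      rw [List.getD_cons_zero, List.filter_cons]
      by_cases hA : a ≤ α
      · exact iff_of_true hA (by simp [hA])
      · refine iff_of_false hA ?_
        simp [hA, hft hA]
    | j + 1 =>
      rw [List.getD_cons_succ, List.filter_cons]
      by_cases hA : a ≤ α
      · have := ih ht j
        simp only [hA, decide_true, if_true, List.length_cons, this]
        omega
      · have hL : ¬ (t.getD j d ≤ α) := by
          rw [ih ht j, hft hA]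
          simp
        refine iff_of_false hL ?_
        simp [hA, hft hA]

lemma getD_sort_le_iff (s : Finset ℕ) (k α : ℕ) (hα : α ≤ k) (j : ℕ) :
    (((s.sort (· ≤ ·)).getD j (k + 1)) ≤ α ↔ j < (s.filter (· ≤ α)).card) := by
  have hlen : ((s.sort (· ≤ ·)).filter (fun x => x ≤ α)).length = (s.filter (· ≤ α)).card := by
    have : (((s.sort (· ≤ ·)).filter (fun x => x ≤ α)) : Multiset ℕ)
        = (s.filter (· ≤ α)).val := by
      rw [← Multiset.filter_coe, Finset.sort_eq]
      rfl
    have := congrArg Multiset.card this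
    rw [Multiset.coe_card] at this
    exact this
  rw [← hlen]
  exact sorted_getD_le_iff _ (Finset.pairwise_sort _ _) α (k + 1) (by omega) j

theorem stmt7 (k l1 b : ℕ) (hl1 : l1 ≤ k) (v : Fin b → ℕ)
    (hv : StrictMono v) (hr : ∀ i, v i ∈ Finset.Icc 1 k)
    (p : ℕ) (hp : p = (Finset.univ.filter (fun i : Fin b => v i ≤ l1)).card)
    (hpb : p ≤ b) :
    ∀ α ∈ Finset.Icc 1 k,
      max (kappa (Finset.image v Finset.univ) α - kappa (Finset.Icc (l1 + 1) (l1 + b)) α) 0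
        = ∑ i : Fin p,
            ((if v (Fin.castLE hpb i) ≤ α then (1 : ℤ) else 0) -
              (if ((Finset.Icc (l1 + 1) k \ Finset.image v Finset.univ).sort (· ≤ ·)).getD
                    (p - ((i : ℕ) + 1)) (k + 1) ≤ α then (1 : ℤ) else 0)) := by
  intro α hα
  rw [Finset.mem_Icc] at hα
  obtain ⟨hα1, hαk⟩ := hα
  set J : Finset ℕ := Finset.image v Finset.univ with hJ
  -- key: v i ≤ l1 ↔ i < p
  have hkey : ∀ i : Fin b, v i ≤ l1 ↔ (i : ℕ) < p := by
    intro i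
    constructor
    · intro h
      have hsub : Finset.Iic i ⊆ Finset.univ.filter (fun j : Fin b => v j ≤ l1) := by
        intro j hj
        simp only [Finset.mem_Iic] at hj
        simp only [Finset.mem_filter, Finset.mem_univ, true_and]
        exact le_trans (hv.monotone hj) h
      have := Finset.card_le_card hsub
      rw [Fin.card_Iic] at this
      omega
    · intro h
      by_contra hc
      have hsub : Finset.univ.filter (fun j : Fin b => v j ≤ l1) ⊆ Finset.Iio i := by
        intro j hj
        simp only [Finset.mem_filter, Finset.mem_univ, true_and] at hj
        simp only [Finset.mem_Iio]
        by_contra hji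
        exact hc (le_trans (hv.monotone (not_lt.mp hji)) hj)
      have := Finset.card_le_card hsub
      rw [Fin.card_Iio] at this
      omega
  have hvinj : Function.Injective v := hv.injective
  -- cardinality of J-filters
  have hJf : ∀ q : ℕ → Prop, ∀ _ : DecidablePred q,
      (J.filter q).card = (Finset.univ.filter (fun i : Fin b => q (v i))).card := by
    intro q _
    rw [hJ, Finset.filter_image, Finset.card_image_of_injective _ hvinj]
  -- the second indicator
  have hgetD : ∀ j : ℕ,
      (((Finset.Icc (l1 + 1) k \ J).sort (· ≤ ·)).getD j (k + 1) ≤ α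
        ↔ j < ((Finset.Icc (l1 + 1) k \ J).filter (· ≤ α)).card) :=
    fun j => getD_sort_le_iff _ k α hαk j
  set g : ℕ := ((Finset.Icc (l1 + 1) k \ J).filter (· ≤ α)).card with hg
  -- split the RHS sum
  rw [Finset.sum_sub_distrib]
  have hsum2 : (∑ i : Fin p, (if ((Finset.Icc (l1 + 1) k \ J).sort (· ≤ ·)).getD
        (p - ((i : ℕ) + 1)) (k + 1) ≤ α then (1 : ℤ) else 0)) = (min p g : ℕ) := by
    rw [Fin.sum_univ_eq_sum_range (fun i => (if ((Finset.Icc (l1 + 1) k \ J).sort (· ≤ ·)).getD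
        (p - (i + 1)) (k + 1) ≤ α then (1 : ℤ) else 0))]
    have hre : ∀ i ∈ Finset.range p, (if ((Finset.Icc (l1 + 1) k \ J).sort (· ≤ ·)).getD
        (p - (i + 1)) (k + 1) ≤ α then (1 : ℤ) else 0)
        = (if p - (i + 1) < g then (1 : ℤ) else 0) := by
      intro i _
      simp only [hgetD (p - (i + 1)), hg]
    rw [Finset.sum_congr rfl hre, Finset.sum_boole]
    have : (Finset.range p).filter (fun i => p - (i + 1) < g) = Finset.Ico (p - g) p := by
      ext x
      simp only [Finset.mem_filter, Finset.mem_range, Finset.mem_Ico]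
      omega
    rw [this, Nat.card_Ico]
    congr 1
    omega
  rw [hsum2]
  -- A := kappa J α as a Fin b count
  have hA : kappa J α = ((Finset.univ.filter (fun i : Fin b => v i ≤ α)).card : ℤ) := by
    unfold kappa
    rw [hJf (fun x => x ≤ α) _]
  set A : ℕ := (Finset.univ.filter (fun i : Fin b => v i ≤ α)).card with hAdef
  rw [hA]
  have hAb : A ≤ b := le_trans (Finset.card_le_card (Finset.filter_subset _ _))
    (by simp)
  rcases le_or_gt α l1 with hcase | hcase
  · -- case α ≤ l1
    have hg0 : g = 0 := by
      rw [hg, Finset.card_eq_zero, Finset.filter_eq_empty_iff]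
      intro x hx
      rw [Finset.mem_sdiff, Finset.mem_Icc] at hx
      omega
    have hsum1 : (∑ i : Fin p, (if v (Fin.castLE hpb i) ≤ α then (1 : ℤ) else 0)) = (A : ℤ) := by
      rw [Finset.sum_boole, hAdef]
      congr 1
      apply Finset.card_bij (fun (i : Fin p) _ => Fin.castLE hpb i)
      · intro i hi
        simp only [Finset.mem_filter, Finset.mem_univ, true_and] at hi ⊢
        exact hi
      · intro i _ j _ h
        have := congrArg Fin.val h
        simp only [Fin.coe_castLE] at this
        exact Fin.ext this
      · intro i hi
        simp only [Finset.mem_filter, Finset.mem_univ, true_and] at hi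
        have hip : (i : ℕ) < p := (hkey i).mp (le_trans hi hcase)
        exact ⟨⟨(i : ℕ), hip⟩, by simpa using hi, by ext; simp⟩
    rw [hsum1, hg0]
    have hkIcc : kappa (Finset.Icc (l1 + 1) (l1 + b)) α = 0 := by
      unfold kappa
      rw [Finset.filter_eq_empty_iff.mpr]
      · simp
      · intro x hx
        rw [Finset.mem_Icc] at hx
        omega
    rw [hkIcc]
    omega
  · -- case α > l1
    have hsum1 : (∑ i : Fin p, (if v (Fin.castLE hpb i) ≤ α then (1 : ℤ) else 0)) = (p : ℤ) := by
      have : ∀ i : Fin p, (if v (Fin.castLE hpb i) ≤ α then (1 : ℤ) else 0) = 1 := by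
        intro i
        have : v (Fin.castLE hpb i) ≤ l1 := (hkey _).mpr (by simp [i.isLt])
        simp [le_trans this (le_of_lt hcase)]
      rw [Finset.sum_congr rfl (fun i _ => this i)]
      simp
    rw [hsum1]
    -- Q := count of i with l1 < v i ≤ α
    set Q : ℕ := (Finset.univ.filter (fun i : Fin b => l1 < v i ∧ v i ≤ α)).card with hQ
    have hApQ : A = p + Q := by
      rw [hAdef, hp, hQ]
      rw [← Finset.card_union_of_disjoint]
      · congr 1
        ext i
        simp only [Finset.mem_filter, Finset.mem_univ, true_and, Finset.mem_union]
        omega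
      · rw [Finset.disjoint_filter]
        intro i _ h1 h2
        omega
    have hgQ : g + Q = α - l1 := by
      have h1 : (Finset.Icc (l1 + 1) k \ J).filter (· ≤ α) = Finset.Icc (l1 + 1) α \ J := by
        ext x
        simp only [Finset.mem_filter, Finset.mem_sdiff, Finset.mem_Icc]
        constructor
        · rintro ⟨⟨⟨h2, _⟩, h4⟩, h5⟩; exact ⟨⟨h2, h5⟩, h4⟩
        · rintro ⟨⟨h2, h3⟩, h4⟩; exact ⟨⟨⟨h2, le_trans h3 hαk⟩, h4⟩, h3⟩
      have h2 : (Finset.Icc (l1 + 1) α ∩ J).card = Q := by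
        have : Finset.Icc (l1 + 1) α ∩ J = J.filter (fun x => l1 < x ∧ x ≤ α) := by
          ext x
          simp only [Finset.mem_inter, Finset.mem_Icc, Finset.mem_filter]
          constructor
          · rintro ⟨⟨hx1, hx2⟩, hx3⟩
            exact ⟨hx3, by omega, hx2⟩
          · rintro ⟨hx3, hx1, hx2⟩
            exact ⟨⟨by omega, hx2⟩, hx3⟩
        rw [this, hJf (fun x => l1 < x ∧ x ≤ α) _, hQ]
      have h3 := Finset.card_sdiff_add_card_inter (Finset.Icc (l1 + 1) α) J
      rw [h2] at h3
      rw [hg, h1]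
      rw [Nat.card_Icc] at h3
      omega
    rcases le_or_gt (l1 + b) α with h2 | h2
    · have hkIcc : kappa (Finset.Icc (l1 + 1) (l1 + b)) α = (b : ℤ) := by
        unfold kappa
        rw [Finset.filter_true_of_mem, Nat.card_Icc]
        · congr 1
          omega
        · intro x hx
          rw [Finset.mem_Icc] at hx
          omega
      rw [hkIcc]
      omega
    · have hkIcc : kappa (Finset.Icc (l1 + 1) (l1 + b)) α = ((α + 1 - (l1 + 1) : ℕ) : ℤ) := by
        unfold kappa
        congr 1
        have : (Finset.Icc (l1 + 1) (l1 + b)).filter (fun i => i ≤ α) = Finset.Icc (l1 + 1) α := by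
          ext x
          rw [Finset.mem_filter, Finset.mem_Icc, Finset.mem_Icc]
          omega
        rw [this, Nat.card_Icc]
      rw [hkIcc]
      omega
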